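/- Let E₁,...,E_n (n finite) be pairwise commuting effects on a complex Hilbert space with ∑_{i=1}^n E_i² ≤ I, and let F^m_{k₁,...,k_n} = ∏_i P^{E_i}((k_i/m,(k_i+1)/m]) be nonzero for some nonnegative integers k₁,...,k_n ≤ m. Then ∑_{i=1}^n k_i² ≤ m². -/

import Mathlib

/-- A projection-valued (spectral) measure for the operator `A`. -/
structure IsSpectralMeasure {H : Type*} [NormedAddCommGroup H] [InnerProductSpace ℂ H]
    [CompleteSpace H] (A : H →L[ℂ] H) (P : Set ℝ → H →L[ℂ] H) : Prop where
  isIdem : ∀ s, IsIdempotentElem (P s)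
  selfAdj : ∀ s, IsSelfAdjoint (P s)
  empty : P ∅ = 0
  univ : P Set.univ = 1
  inter : ∀ s t, P (s ∩ t) = P s * P t
  hasSum : ∀ (s : ℕ → Set ℝ), Pairwise (Function.onFun Disjoint s) →
    ∀ x, HasSum (fun n => P (s n) x) (P (⋃ n, s n) x)
  commutes : ∀ s, A * P s = P s * A
  smul_le : ∀ a b : ℝ, (a : ℂ) • P (Set.Ioc a b) ≤ P (Set.Ioc a b) * A * P (Set.Ioc a b)
  le_smul : ∀ a b : ℝ, P (Set.Ioc a b) * A * P (Set.Ioc a b) ≤ (b : ℂ) • P (Set.Ioc a b)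
/-- The product of spectral projections `F^m_{k₁,…,k_n} = ∏ᵢ P^{Eᵢ}((kᵢ/m,(kᵢ+1)/m])`. -/
noncomputable def Fproj {H : Type*} [NormedAddCommGroup H] [InnerProductSpace ℂ H]
    [CompleteSpace H] {n : ℕ} (P : Fin n → Set ℝ → H →L[ℂ] H) (m : ℕ) (k : Fin n → ℕ) :
    H →L[ℂ] H :=
  (List.ofFn fun i => P i (Set.Ioc ((k i : ℝ) / m) (((k i : ℝ) + 1) / m))).prod

private lemma absorb_list_prod {M : Type*} [Monoid M] {p : M} (hp : p * p = p) :
    ∀ (L : List M), (∀ q ∈ L, p * q = q * p) → p ∈ L → p * L.prod = L.prod := by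
  intro L
  induction L with
  | nil => simp
  | cons a t ih =>
    intro hc hmem
    rcases List.mem_cons.mp hmem with h | h
    · subst h
      rw [List.prod_cons, ← mul_assoc, hp]
    · rw [List.prod_cons, ← mul_assoc, hc a List.mem_cons_self, mul_assoc,
        ih (fun q hq => hc q (List.mem_cons_of_mem a hq)) h]

/-- If `∑ Eᵢ² ≤ I` and `F^m_{k₁,…,k_n} ≠ 0`, then `∑ kᵢ² ≤ m²`. -/
theorem sum_sq_le_of_Fproj_ne_zero {H : Type*} [NormedAddCommGroup H]
    [InnerProductSpace ℂ H] [CompleteSpace H] {n : ℕ}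
    (E : Fin n → H →L[ℂ] H) (P : Fin n → Set ℝ → H →L[ℂ] H)
    (heff : ∀ i, 0 ≤ E i ∧ E i ≤ 1)
    (hcomm : ∀ i j, E i * E j = E j * E i)
    (hP : ∀ i, IsSpectralMeasure (E i) (P i))
    (hPcomm : ∀ i j s t, P i s * P j t = P j t * P i s)
    (hsum : ∑ i, E i * E i ≤ 1)
    (m : ℕ) (hm : 0 < m) (k : Fin n → ℕ) (hk : ∀ i, k i ≤ m)
    (hF : Fproj P m k ≠ 0) :
    ∑ i, (k i) ^ 2 ≤ m ^ 2 := by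
  classical
  obtain ⟨x, hx⟩ : ∃ x, Fproj P m k x ≠ 0 := by
    by_contra h
    push_neg at h
    exact hF (ContinuousLinearMap.ext fun x => by simp [h x])
  set y : H := Fproj P m k x with hy
  have hy0 : (0:ℝ) < ‖y‖ := norm_pos_iff.mpr hx
  have habs : ∀ i, P i (Set.Ioc ((k i : ℝ) / m) (((k i : ℝ) + 1) / m)) * Fproj P m k
      = Fproj P m k := by
    intro i
    refine absorb_list_prod ((hP i).isIdem _) _ ?_ ?_
    · intro q hq
      obtain ⟨j, rfl⟩ := List.mem_ofFn.mp hq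
      exact hPcomm i j _ _
    · exact List.mem_ofFn.mpr ⟨i, rfl⟩
  have hPy : ∀ i, P i (Set.Ioc ((k i : ℝ) / m) (((k i : ℝ) + 1) / m)) y = y := fun i => by
    have := congrArg (fun T : H →L[ℂ] H => T x) (habs i)
    simpa [hy] using this
  have hEsa : ∀ i, IsSelfAdjoint (E i) :=
    fun i => (((E i).nonneg_iff_isPositive).mp (heff i).1).isSelfAdjoint
  -- square norms of E i y: the key computation
  have hEnorm : ∀ i, RCLike.re (inner ℂ ((E i) ((E i) y)) y : ℂ) = ‖E i y‖ ^ 2 := by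
    intro i
    nth_rewrite 1 [← (hEsa i).adjoint_eq]
    rw [ContinuousLinearMap.adjoint_inner_left, inner_self_eq_norm_sq]
  -- lower bound
  have hlow : ∀ i, ((k i : ℝ) / m) ^ 2 * ‖y‖ ^ 2 ≤ ‖E i y‖ ^ 2 := by
    intro i
    set a : ℝ := (k i : ℝ) / m with ha
    have ha0 : 0 ≤ a := by positivity
    have h := (hP i).smul_le a (((k i : ℝ) + 1) / m)
    rw [ContinuousLinearMap.le_def] at h
    have h2 := h.re_inner_nonneg_left y
    have hQsa := (hP i).selfAdj (Set.Ioc a (((k i : ℝ) + 1) / m))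
    have hQy : P i (Set.Ioc a (((k i : ℝ) + 1) / m)) y = y := hPy i
    have hre : a * ‖y‖ ^ 2 ≤ RCLike.re (inner ℂ ((E i) y) y : ℂ) := by
      have hcalc : (P i (Set.Ioc a (((k i : ℝ) + 1) / m)) * E i *
          P i (Set.Ioc a (((k i : ℝ) + 1) / m)) - (a : ℂ) •
          P i (Set.Ioc a (((k i : ℝ) + 1) / m))) y
          = P i (Set.Ioc a (((k i : ℝ) + 1) / m)) ((E i) y) - (a : ℂ) • y := by
        simp [ContinuousLinearMap.sub_apply, ContinuousLinearMap.mul_apply, hQy]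
      have hinner : RCLike.re (inner ℂ (P i (Set.Ioc a (((k i : ℝ) + 1) / m)) ((E i) y)
          - (a : ℂ) • y) y : ℂ)
          = RCLike.re (inner ℂ ((E i) y) y : ℂ) - a * ‖y‖ ^ 2 := by
        rw [inner_sub_left, ← hQsa.adjoint_eq, ContinuousLinearMap.adjoint_inner_left,
          hQy, inner_smul_left, map_sub]
        simp [inner_self_eq_norm_sq, RCLike.conj_ofReal, ← Complex.ofReal_pow, Complex.ofReal_re]
      have h2' := h2
      rw [hcalc, hinner] at h2'
      linarith
    have hcs : RCLike.re (inner ℂ ((E i) y) y : ℂ) ≤ ‖E i y‖ * ‖y‖ := re_inner_le_norm _ _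
    have h3 : a * ‖y‖ ≤ ‖E i y‖ := by
      have : (a * ‖y‖) * ‖y‖ ≤ ‖E i y‖ * ‖y‖ := by nlinarith
      exact le_of_mul_le_mul_right this hy0
    calc a ^ 2 * ‖y‖ ^ 2 = (a * ‖y‖) ^ 2 := by ring
      _ ≤ ‖E i y‖ ^ 2 := by nlinarith [norm_nonneg (E i y)]
  -- upper bound
  have hup : ∑ i, ‖E i y‖ ^ 2 ≤ ‖y‖ ^ 2 := by
    have h := hsum
    rw [ContinuousLinearMap.le_def] at h
    have h2 := h.re_inner_nonneg_left y
    have hcalc : ((1 : H →L[ℂ] H) - ∑ i, E i * E i) y = y - ∑ i, (E i) ((E i) y) := by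
      simp [ContinuousLinearMap.sub_apply, ContinuousLinearMap.sum_apply,
        ContinuousLinearMap.mul_apply]
    have hinner : RCLike.re (inner ℂ (y - ∑ i, (E i) ((E i) y)) y : ℂ)
        = ‖y‖ ^ 2 - ∑ i, ‖E i y‖ ^ 2 := by
      rw [inner_sub_left, sum_inner, map_sub, map_sum, inner_self_eq_norm_sq]
      congr 1
      exact Finset.sum_congr rfl fun i _ => hEnorm i
    rw [hcalc, hinner] at h2
    linarith
  have hkey : ∑ i, ((k i : ℝ) / m) ^ 2 ≤ 1 := by
    have h1 : ∑ i, ((k i : ℝ) / m) ^ 2 * ‖y‖ ^ 2 ≤ ‖y‖ ^ 2 :=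
      le_trans (Finset.sum_le_sum fun i _ => hlow i) hup
    rw [← Finset.sum_mul] at h1
    have h1' : (∑ i, ((k i : ℝ) / m) ^ 2) * ‖y‖ ^ 2 ≤ 1 * ‖y‖ ^ 2 := by
      rw [one_mul]; exact h1
    exact le_of_mul_le_mul_right h1' (by positivity)
  have hm' : (0:ℝ) < (m : ℝ) := by exact_mod_cast hm
  have hfin : ∑ i, (k i : ℝ) ^ 2 ≤ (m : ℝ) ^ 2 := by
    have h2 := mul_le_mul_of_nonneg_right hkey (le_of_lt (pow_pos hm' 2))
    rw [one_mul, Finset.sum_mul] at h2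
    calc ∑ i, (k i : ℝ) ^ 2 = ∑ i, ((k i : ℝ) / m) ^ 2 * (m : ℝ) ^ 2 := by
          refine Finset.sum_congr rfl fun i _ => ?_
          field_simp
      _ ≤ (m : ℝ) ^ 2 := h2
  exact_mod_cast hfin
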